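/- arXiv:0812.0494 — 4 statements merged into one kernel-verified Lean document; each statement's English description precedes it below -/
import Mathlib

section
/- Let N ≥ 2 and let C be a real symmetric positive definite N×N matrix, with non-diagonality measure δ(C) = (1/(N−1)) · (∑_{r≠c} C_{rc}²) / (∑_{r} C_{rr}²). Then 0 ≤ δ(C) ≤ 1, with δ(C) = 0 if and only if C is diagonal. Moreover the bound 1 is attained in the positive semidefinite closure: for the N×N all-ones matrix J one has δ(J) = 1. -/
open Matrix Finset

/-- The non-diagonality measure `δ(C)` of a real matrix `C`:
`δ(C) = (1/(N−1)) · (∑_{r≠c} C_{rc}²) / (∑_r C_{rr}²)`. -/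
noncomputable def nonDiagonality {N : ℕ} (C : Matrix (Fin N) (Fin N) ℝ) : ℝ :=
  (1 / ((N : ℝ) - 1)) *
    (∑ p ∈ Finset.univ.filter (fun p : Fin N × Fin N => p.1 ≠ p.2), (C p.1 p.2) ^ 2) /
    (∑ r : Fin N, (C r r) ^ 2)

lemma posdef_diag_pos {N : ℕ} (C : Matrix (Fin N) (Fin N) ℝ) (hpd : C.PosDef) (r : Fin N) :
    0 < C r r := by
  have := hpd.dotProduct_mulVec_pos (x := Pi.single r 1) (fun h => by simpa using congrFun h r)
  simpa [mulVec, dotProduct, Pi.single_apply] using this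

lemma posdef_sq_le {N : ℕ} (C : Matrix (Fin N) (Fin N) ℝ) (hsymm : C.IsSymm)
    (hpd : C.PosDef) (r c : Fin N) (h : r ≠ c) :
    (C r c) ^ 2 ≤ C r r * C c c := by
  have key : ∀ t : ℝ, 0 ≤ t^2 * C r r + t * (C r c + C c r) + C c c := by
    intro t
    set x : Fin N → ℝ := fun i => t * (Pi.single r 1 : Fin N → ℝ) i +
      (Pi.single c 1 : Fin N → ℝ) i with hxdef
    by_cases hx : x = 0
    · have h1 := congrFun hx c
      simp [hxdef, Pi.single_apply, h, h.symm] at h1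
    · have := hpd.dotProduct_mulVec_pos hx
      have e : (star x) ⬝ᵥ (C *ᵥ x) = t^2 * C r r + t * (C r c + C c r) + C c c := by
        simp [hxdef, mulVec, dotProduct, Pi.single_apply, mul_add, add_mul,
          Finset.sum_add_distrib, Finset.mul_sum, mul_ite, ite_mul, h, h.symm]
        ring
      rw [e] at this
      exact this.le
  have hcr : C c r = C r c := by
    have := congrFun (congrFun hsymm r) c
    simpa [Matrix.transpose_apply] using this
  have ha : 0 < C r r := posdef_diag_pos C hpd r
  have := key (-(C r c) / C r r)
  rw [hcr] at this
  have hane : C r r ≠ 0 := ne_of_gt ha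
  have h5 : 0 ≤ C c c * C r r - C r c ^ 2 := by
    have e : ((-C r c / C r r) ^ 2 * C r r + -C r c / C r r * (C r c + C r c) + C c c)
        * C r r = C c c * C r r - C r c ^ 2 := by
      field_simp; ring
    rw [← e]
    exact mul_nonneg this ha.le
  linarith

/-- For a real symmetric positive definite `N×N` matrix (`N ≥ 2`), the non-diagonality
measure satisfies `0 ≤ δ(C) ≤ 1`, with `δ(C) = 0` iff `C` is diagonal; and the bound `1`
is attained in the positive semidefinite closure: the all-ones matrix `J` has `δ(J) = 1`. -/
theorem nonDiagonality_bounds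
    (N : ℕ) (hN : 2 ≤ N) (C : Matrix (Fin N) (Fin N) ℝ)
    (hsymm : C.IsSymm) (hpd : C.PosDef) :
    0 ≤ nonDiagonality C ∧ nonDiagonality C ≤ 1 ∧
      (nonDiagonality C = 0 ↔ C.IsDiag) ∧
      nonDiagonality (Matrix.of fun _ _ : Fin N => (1 : ℝ)) = 1 := by
  have hN1 : (0:ℝ) < (N:ℝ) - 1 := by
    have : (2:ℝ) ≤ (N:ℝ) := by exact_mod_cast hN
    linarith
  set S := ∑ r : Fin N, (C r r) ^ 2 with hSdef
  set off := ∑ p ∈ Finset.univ.filter (fun p : Fin N × Fin N => p.1 ≠ p.2), (C p.1 p.2) ^ 2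
    with hoffdef
  have hSpos : 0 < S := by
    apply Finset.sum_pos
    · intro r _
      exact pow_pos (posdef_diag_pos C hpd r) 2
    · have : Nonempty (Fin N) := ⟨⟨0, by omega⟩⟩
      exact Finset.univ_nonempty
  have hoffnn : 0 ≤ off :=
    Finset.sum_nonneg fun p _ => sq_nonneg _
  -- key sum identity for any f : Fin N → ℝ
  have ident : ∀ f : Fin N → ℝ,
      ∑ p ∈ Finset.univ.filter (fun p : Fin N × Fin N => p.1 ≠ p.2), f p.1 * f p.2
        = (∑ r, f r)^2 - ∑ r, (f r)^2 := by
    intro f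
    have hsplit := Finset.sum_filter_add_sum_filter_not Finset.univ
      (fun p : Fin N × Fin N => p.1 ≠ p.2) (fun p => f p.1 * f p.2)
    have htot : ∑ p : Fin N × Fin N, f p.1 * f p.2 = (∑ r, f r)^2 := by
      rw [Fintype.sum_prod_type, sq, Finset.sum_mul_sum]
    have hdiag : ∑ p ∈ Finset.univ.filter
        (fun p : Fin N × Fin N => ¬ p.1 ≠ p.2), f p.1 * f p.2 = ∑ r, (f r)^2 := by
      rw [Finset.sum_filter, Fintype.sum_prod_type]
      simp [Finset.sum_ite_eq', sq]
    have := hsplit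
    rw [hdiag, htot] at this
    linarith
  -- upper bound on off
  have hub : off ≤ ((N:ℝ) - 1) * S := by
    have h1 : off ≤ ∑ p ∈ Finset.univ.filter (fun p : Fin N × Fin N => p.1 ≠ p.2),
        C p.1 p.1 * C p.2 p.2 := by
      apply Finset.sum_le_sum
      intro p hp
      exact posdef_sq_le C hsymm hpd p.1 p.2 (by simpa using (Finset.mem_filter.mp hp).2)
    have h2 := ident (fun r => C r r)
    have h3 : (∑ r : Fin N, C r r)^2 ≤ (N:ℝ) * S := by
      have := sq_sum_le_card_mul_sum_sq (s := Finset.univ) (f := fun r : Fin N => C r r)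
      simpa [hSdef, sq] using this
    calc off ≤ (∑ r : Fin N, C r r)^2 - S := by rw [← h2]; exact h1
      _ ≤ (N:ℝ) * S - S := by linarith
      _ = ((N:ℝ) - 1) * S := by ring
  have hδ : nonDiagonality C = (1 / ((N:ℝ) - 1)) * off / S := rfl
  refine ⟨?_, ?_, ?_, ?_⟩
  · rw [hδ]
    positivity
  · rw [hδ, div_le_one hSpos, one_div, inv_mul_le_iff₀ hN1]
    linarith
  · rw [hδ]
    rw [div_eq_zero_iff]
    constructor
    · rintro (h | h)
      · rcases mul_eq_zero.mp h with h' | h'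
        · exact absurd h' (by positivity)
        · intro i j hij
          have := (Finset.sum_eq_zero_iff_of_nonneg
            (fun p _ => sq_nonneg (C p.1 p.2))).mp h' (i, j) (by simp [hij])
          exact sq_eq_zero_iff.mp this
      · exact absurd h (ne_of_gt hSpos)
    · intro hd
      left
      have : off = 0 := by
        apply Finset.sum_eq_zero
        intro p hp
        have hne : p.1 ≠ p.2 := by simpa using (Finset.mem_filter.mp hp).2
        rw [hd hne]
        simp
      rw [this, mul_zero]
  · have hcard : ∑ p ∈ Finset.univ.filter (fun p : Fin N × Fin N => p.1 ≠ p.2),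
        ((1:ℝ)) ^ 2 = (N:ℝ)^2 - (N:ℝ) := by
      have := ident (fun _ : Fin N => (1:ℝ))
      simpa using this
    have hNne : (N:ℝ) ≠ 0 := by positivity
    have hN1ne : (N:ℝ) - 1 ≠ 0 := ne_of_gt hN1
    rw [nonDiagonality]
    simp only [Matrix.of_apply]
    rw [hcard]
    simp only [one_pow, Finset.sum_const, Finset.card_univ, Fintype.card_fin, nsmul_eq_mul,
      mul_one]
    field_simp
end

section
/- Let Q be a real orthogonal N×N matrix (Qᵀ Q = I_N), let (D_ν)_{ν ∈ I} be a family of real diagonal N×N matrices such that Q D_ν Qᵀ is diagonal for every ν ∈ I, and suppose the diagonal profiles are pairwise distinguishable: for every i ≠ j there exists ν ∈ I with (D_ν)_{ii} ≠ (D_ν)_{jj}. Then Q is a signed permutation matrix. -/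
open Matrix

/-- Identifiability after whitening: if an orthogonal matrix `Q` keeps a family of
diagonal matrices diagonal under congruence, and the diagonal profiles of the family
distinguish every pair of indices, then `Q` is a signed permutation matrix. -/
theorem orthogonal_joint_diagonalizer_is_signed_permutation
    (N : ℕ) (ι : Type*) (Q : Matrix (Fin N) (Fin N) ℝ) (hQ : Qᵀ * Q = 1)
    (D : ι → Fin N → ℝ)
    (hdiag : ∀ ν : ι, (Q * Matrix.diagonal (D ν) * Qᵀ).IsDiag)
    (hsep : ∀ i j : Fin N, i ≠ j → ∃ ν : ι, D ν i ≠ D ν j) :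
    ∃ (σ : Equiv.Perm (Fin N)) (ε : Fin N → ℝ),
      (∀ i, ε i = 1 ∨ ε i = -1) ∧
      ∀ i j, Q i j = if j = σ i then ε i else 0 := by
  classical
  have hQQT : Q * Qᵀ = 1 := mul_eq_one_comm.mp hQ
  -- eigen equation: Q i k * D ν k = M i i * Q i k
  have key : ∀ (ν : ι) (i k : Fin N),
      Q i k * D ν k = (Q * Matrix.diagonal (D ν) * Qᵀ) i i * Q i k := by
    intro ν i k
    have h1 : (Q * Matrix.diagonal (D ν) * Qᵀ) * Q = Q * Matrix.diagonal (D ν) := by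
      rw [Matrix.mul_assoc, hQ, Matrix.mul_one]
    have h2 : ((Q * Matrix.diagonal (D ν) * Qᵀ) * Q) i k
        = (Q * Matrix.diagonal (D ν)) i k := by rw [h1]
    rw [Matrix.mul_apply, Matrix.mul_diagonal] at h2
    rw [Finset.sum_eq_single i (fun j _ hj =>
      by rw [hdiag ν hj.symm, zero_mul]) (fun h => absurd (Finset.mem_univ _) h)] at h2
    exact h2.symm
  have uniq : ∀ i k l, Q i k ≠ 0 → Q i l ≠ 0 → k = l := by
    intro i k l hk hl
    by_contra hne
    obtain ⟨ν, hν⟩ := hsep k l hne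
    have h1 : D ν k = (Q * Matrix.diagonal (D ν) * Qᵀ) i i := by
      have := key ν i k
      rw [mul_comm (Q i k)] at this
      exact mul_right_cancel₀ hk this
    have h2 : D ν l = (Q * Matrix.diagonal (D ν) * Qᵀ) i i := by
      have := key ν i l
      rw [mul_comm (Q i l)] at this
      exact mul_right_cancel₀ hl this
    exact hν (h1.trans h2.symm)
  have exne : ∀ i, ∃ k, Q i k ≠ 0 := by
    intro i
    by_contra h
    push_neg at h
    have h1 : (Q * Qᵀ) i i = 0 := by
      rw [Matrix.mul_apply]
      apply Finset.sum_eq_zero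
      intro k _
      rw [h k, zero_mul]
    rw [hQQT, Matrix.one_apply_eq] at h1
    exact one_ne_zero h1
  choose σ₀ hσ₀ using exne
  have norm1 : ∀ i, Q i (σ₀ i) * Q i (σ₀ i) = 1 := by
    intro i
    have h1 : (Q * Qᵀ) i i = 1 := by rw [hQQT, Matrix.one_apply_eq]
    rw [Matrix.mul_apply, Finset.sum_eq_single (σ₀ i) (fun k _ hk => by
      rcases eq_or_ne (Q i k) 0 with h | h
      · rw [h, zero_mul]
      · exact absurd (uniq i k (σ₀ i) h (hσ₀ i)) hk)
      (fun h => absurd (Finset.mem_univ _) h)] at h1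
    simpa using h1
  have inj : Function.Injective σ₀ := by
    intro i j hij
    by_contra hne
    have h0 : (Q * Qᵀ) i j = 0 := by rw [hQQT]; exact Matrix.one_apply_ne hne
    rw [Matrix.mul_apply, Finset.sum_eq_single (σ₀ i) (fun k _ hk => by
      rcases eq_or_ne (Q i k) 0 with h | h
      · rw [h, zero_mul]
      · exact absurd (uniq i k (σ₀ i) h (hσ₀ i)) hk)
      (fun h => absurd (Finset.mem_univ _) h)] at h0
    rw [Matrix.transpose_apply] at h0
    have hj : Q j (σ₀ i) ≠ 0 := by rw [hij]; exact hσ₀ j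
    exact mul_ne_zero (hσ₀ i) hj h0
  refine ⟨Equiv.ofBijective σ₀ (Finite.injective_iff_bijective.mp inj),
    fun i => Q i (σ₀ i), fun i => mul_self_eq_one_iff.mp (norm1 i), ?_⟩
  intro i j
  have hcoe : (Equiv.ofBijective σ₀ (Finite.injective_iff_bijective.mp inj)) i = σ₀ i := rfl
  rw [hcoe]
  split_ifs with h
  · rw [h]
  · by_contra hne
    exact h (uniq i j (σ₀ i) hne (hσ₀ i))
end

section
/- Let C₁ be a real symmetric positive definite N×N matrix and C₂ a real N×N matrix. Suppose B and B′ are invertible real N×N matrices with B C₁ Bᵀ = I_N and B′ C₁ B′ᵀ = I_N, such that D = B C₂ Bᵀ is diagonal with pairwise distinct diagonal entries and D′ = B′ C₂ B′ᵀ is diagonal. Then there exists a signed permutation matrix S with B′ = S B; that is, the two-matrix joint diagonalizer is unique up to sign and permutation of its rows. -/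
open Matrix

/-- Uniqueness of the two-matrix joint diagonalizer up to sign and permutation of rows:
if `B` and `B'` both whiten `C₁` and diagonalize `C₂` by congruence, and the diagonal
entries of `B C₂ Bᵀ` are pairwise distinct, then `B' = S B` for a signed permutation
matrix `S`. -/
theorem joint_diagonalizer_unique_up_to_signed_permutation
    (N : ℕ) (C₁ C₂ : Matrix (Fin N) (Fin N) ℝ)
    (h₁symm : C₁.IsSymm) (h₁pd : C₁.PosDef)
    (B B' : Matrix (Fin N) (Fin N) ℝ) (hB : IsUnit B) (hB' : IsUnit B')
    (hBw : B * C₁ * Bᵀ = 1) (hB'w : B' * C₁ * B'ᵀ = 1)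
    (d d' : Fin N → ℝ)
    (hBd : B * C₂ * Bᵀ = Matrix.diagonal d)
    (hB'd : B' * C₂ * B'ᵀ = Matrix.diagonal d')
    (hdist : Function.Injective d) :
    ∃ S : Matrix (Fin N) (Fin N) ℝ,
      (∃ (σ : Equiv.Perm (Fin N)) (ε : Fin N → ℝ),
        (∀ i, ε i = 1 ∨ ε i = -1) ∧
        ∀ i j, S i j = if j = σ i then ε i else 0) ∧
      B' = S * B := by
  have hBdet : IsUnit B.det := (Matrix.isUnit_iff_isUnit_det B).mp hB
  have hBtdet : IsUnit Bᵀ.det := by simpa using hBdet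
  have hBi : B⁻¹ * B = 1 := Matrix.nonsing_inv_mul B hBdet
  have hBti : Bᵀ * (Bᵀ)⁻¹ = 1 := Matrix.mul_nonsing_inv Bᵀ hBtdet
  set M : Matrix (Fin N) (Fin N) ℝ := B' * B⁻¹ with hM
  have hC₁ : C₁ = B⁻¹ * (Bᵀ)⁻¹ := by
    calc C₁ = (B⁻¹ * B) * C₁ * (Bᵀ * (Bᵀ)⁻¹) := by rw [hBi, hBti]; simp
    _ = B⁻¹ * (B * C₁ * Bᵀ) * (Bᵀ)⁻¹ := by simp only [Matrix.mul_assoc]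
    _ = B⁻¹ * (Bᵀ)⁻¹ := by rw [hBw]; simp
  have hC₂ : C₂ = B⁻¹ * Matrix.diagonal d * (Bᵀ)⁻¹ := by
    calc C₂ = (B⁻¹ * B) * C₂ * (Bᵀ * (Bᵀ)⁻¹) := by rw [hBi, hBti]; simp
    _ = B⁻¹ * (B * C₂ * Bᵀ) * (Bᵀ)⁻¹ := by simp only [Matrix.mul_assoc]
    _ = B⁻¹ * Matrix.diagonal d * (Bᵀ)⁻¹ := by rw [hBd]
  have hMt : Mᵀ = (Bᵀ)⁻¹ * B'ᵀ := by
    rw [hM, Matrix.transpose_mul, Matrix.transpose_nonsing_inv]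
  have hMo : M * Mᵀ = 1 := by
    calc M * Mᵀ = B' * (B⁻¹ * (Bᵀ)⁻¹) * B'ᵀ := by
          rw [hM, hMt]; simp only [Matrix.mul_assoc]
    _ = 1 := by rw [← hC₁]; exact hB'w
  have hMo' : Mᵀ * M = 1 := mul_eq_one_comm.mp hMo
  have hdiag : Matrix.diagonal d' = M * Matrix.diagonal d * Mᵀ := by
    calc Matrix.diagonal d' = B' * C₂ * B'ᵀ := hB'd.symm
    _ = B' * (B⁻¹ * Matrix.diagonal d * (Bᵀ)⁻¹) * B'ᵀ := by rw [← hC₂]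
    _ = M * Matrix.diagonal d * Mᵀ := by rw [hM, hMt]; simp only [Matrix.mul_assoc]
  have hcomm : M * Matrix.diagonal d = Matrix.diagonal d' * M := by
    calc M * Matrix.diagonal d = M * Matrix.diagonal d * (Mᵀ * M) := by rw [hMo']; simp
    _ = (M * Matrix.diagonal d * Mᵀ) * M := by simp only [Matrix.mul_assoc]
    _ = Matrix.diagonal d' * M := by rw [← hdiag]
  have hent : ∀ i j, M i j * d j = d' i * M i j := by
    intro i j
    have := congrFun (congrFun hcomm i) j
    simpa [Matrix.mul_apply, Matrix.diagonal, Finset.sum_ite_eq, Finset.sum_ite_eq'] using this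
  have hrow : ∀ i, ∑ j, M i j * M i j = 1 := by
    intro i
    have := congrFun (congrFun hMo i) i
    simpa [Matrix.mul_apply, Matrix.one_apply] using this
  have hex : ∀ i, ∃ j, M i j ≠ 0 := by
    intro i
    by_contra h
    push_neg at h
    have := hrow i
    simp [h] at this
  choose σ₀ hσ₀ using hex
  have key : ∀ i j, M i j ≠ 0 → j = σ₀ i := by
    intro i j hj
    have h1 : d j = d' i := by
      have := hent i j
      have := mul_left_cancel₀ hj (by linarith [hent i j] : M i j * d j = M i j * d' i)
      linarith [this]
    have h2 : d (σ₀ i) = d' i := by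
      have := hent i (σ₀ i)
      have h := mul_left_cancel₀ (hσ₀ i) (by linarith [hent i (σ₀ i)] : M i (σ₀ i) * d (σ₀ i) = M i (σ₀ i) * d' i)
      linarith [h]
    exact hdist (h1.trans h2.symm)
  have hzero : ∀ i j, j ≠ σ₀ i → M i j = 0 := by
    intro i j h
    by_contra hj
    exact h (key i j hj)
  have hsq : ∀ i, M i (σ₀ i) * M i (σ₀ i) = 1 := by
    intro i
    have := hrow i
    rwa [Finset.sum_eq_single (σ₀ i) (fun j _ hj => by rw [hzero i j hj]; ring)
      (fun h => absurd (Finset.mem_univ _) h)] at this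
  have hinj : Function.Injective σ₀ := by
    intro i i' h
    by_contra hne
    have h0 : (M * Mᵀ) i i' = 0 := by
      rw [hMo]; simp [Matrix.one_apply, hne]
    have h1 : ∑ j, M i j * M i' j = 0 := by
      simpa [Matrix.mul_apply] using h0
    rw [Finset.sum_eq_single (σ₀ i) (fun j _ hj => by rw [hzero i j hj]; ring)
      (fun h => absurd (Finset.mem_univ _) h)] at h1
    rw [h] at h1
    exact (mul_ne_zero (h ▸ hσ₀ i) (hσ₀ i')) h1
  refine ⟨M, ⟨Equiv.ofBijective σ₀ (Finite.injective_iff_bijective.mp hinj),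
    fun i => M i (σ₀ i), fun i => mul_self_eq_one_iff.mp (hsq i), ?_⟩, ?_⟩
  · intro i j
    by_cases h : j = σ₀ i
    · simp [Equiv.ofBijective, h]
    · simp [Equiv.ofBijective, h, hzero i j h]
  · rw [hM, Matrix.mul_assoc, hBi, Matrix.mul_one]
end

section
/- Let A and B be invertible real N×N matrices and let (Λ_ν)_{ν=1,…,K} be real diagonal N×N matrices such that B (A Λ_ν Aᵀ) Bᵀ is diagonal for every ν. Assume the source profiles are pairwise non-proportional: for every i ≠ j, the vectors ((Λ_ν)_{ii})_{ν=1,…,K} and ((Λ_ν)_{jj})_{ν=1,…,K} in ℝ^K are linearly independent (in particular neither is zero and neither is a scalar multiple of the other). Then the system matrix G = B A is a generalized permutation matrix: there exist a permutation σ of {1, …, N} and nonzero reals λ_1, …, λ_N such that G_{ij} = λ_i if j = σ(i) and G_{ij} = 0 otherwise. -/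
open Matrix

lemma exists_nonvanishing_functional {N K : ℕ} (v : Fin N → Fin K → ℝ)
    (hv : ∀ m, v m ≠ 0) :
    ∃ α : Fin K → ℝ, ∀ m, (∑ ν, α ν * v m ν) ≠ 0 := by
  suffices h : ∀ S : Finset (Fin N), ∃ α : Fin K → ℝ, ∀ m ∈ S, (∑ ν, α ν * v m ν) ≠ 0 by
    obtain ⟨α, hα⟩ := h Finset.univ
    exact ⟨α, fun m => hα m (Finset.mem_univ m)⟩
  intro S
  induction S using Finset.induction with
  | empty => exact ⟨fun _ => 1, by simp⟩
  | @insert a S ha IH =>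
    obtain ⟨α, hα⟩ := IH
    set f : Fin N → ℝ := fun m => ∑ ν, α ν * v m ν with hf
    set g : Fin N → ℝ := fun m => ∑ ν, v a ν * v m ν with hg
    have hga : 0 < g a := by
      have hex : ∃ ν, v a ν ≠ 0 := by
        by_contra h
        push_neg at h
        exact hv a (funext h)
      obtain ⟨ν₀, hν₀⟩ := hex
      refine Finset.sum_pos' (fun ν _ => mul_self_nonneg _) ⟨ν₀, Finset.mem_univ _, ?_⟩
      exact mul_self_pos.mpr hν₀
    obtain ⟨c, hc⟩ := Infinite.exists_notMem_finset
      (insert (-(f a)/(g a)) (S.image fun m => -(f m)/(g m)))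
    refine ⟨fun ν => α ν + c * v a ν, ?_⟩
    intro m hm
    have hexp : ∑ ν, (α ν + c * v a ν) * v m ν = f m + c * g m := by
      rw [hf, hg, Finset.mul_sum, ← Finset.sum_add_distrib]
      exact Finset.sum_congr rfl fun ν _ => by ring
    rw [hexp]
    rcases Finset.mem_insert.mp hm with rfl | hmS
    · intro h0
      apply hc
      have : c = -(f m)/(g m) := by field_simp; linarith
      rw [this]
      exact Finset.mem_insert_self _ _
    · intro h0
      have hfm := hα m hmS
      by_cases hgm : g m = 0
      · rw [hgm, mul_zero, add_zero] at h0
        exact hfm h0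
      · apply hc
        have : c = -(f m)/(g m) := by field_simp; linarith
        rw [this]
        exact Finset.mem_insert_of_mem (Finset.mem_image_of_mem _ hmS)


/-- SOS identifiability: if `B` jointly diagonalizes all the sensor-space statistics
`A Λ_ν Aᵀ` of mutually uncorrelated sources whose statistical profiles are pairwise
non-proportional (linearly independent in ℝ^K), then the system matrix `G = B A` is a
generalized permutation matrix (a nonzero scaling composed with a permutation). -/
theorem system_matrix_is_generalized_permutation
    (N K : ℕ)
    (A B : Matrix (Fin N) (Fin N) ℝ) (hA : IsUnit A) (hB : IsUnit B)
    (Λ : Fin K → Fin N → ℝ)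
    (hdiag : ∀ ν : Fin K, (B * (A * Matrix.diagonal (Λ ν) * Aᵀ) * Bᵀ).IsDiag)
    (hind : ∀ i j : Fin N, i ≠ j →
      LinearIndependent ℝ ![fun ν : Fin K => Λ ν i, fun ν : Fin K => Λ ν j]) :
    ∃ (σ : Equiv.Perm (Fin N)) (lam : Fin N → ℝ),
      (∀ i, lam i ≠ 0) ∧
      ∀ i j, (B * A) i j = if j = σ i then lam i else 0 := by
  set G := B * A with hGdef
  have hG : IsUnit G := hB.mul hA
  have hdetG : G.det ≠ 0 := ((Matrix.isUnit_iff_isUnit_det G).mp hG).ne_zero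
  have hGX : ∀ X : Matrix (Fin N) (Fin N) ℝ, B * (A * X * Aᵀ) * Bᵀ = G * X * Gᵀ := by
    intro X
    rw [hGdef, Matrix.transpose_mul]
    noncomm_ring
  have hc : ∀ (ν : Fin K) (i j : Fin N), i ≠ j → ∑ m, G i m * Λ ν m * G j m = 0 := by
    intro ν i j hij
    have h := (hdiag ν) hij
    rw [hGX] at h
    rw [← h, Matrix.mul_apply]
    exact Finset.sum_congr rfl fun m _ => by
      rw [Matrix.mul_diagonal, Matrix.transpose_apply]
  clear_value G
  clear hGdef hGX hdiag
  have hdiagGen : ∀ w : Fin N → ℝ, (∀ i j, i ≠ j → ∑ m, G i m * w m * G j m = 0) →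
      G * diagonal w * Gᵀ = diagonal (fun k => ∑ m, G k m * w m * G k m) := by
    intro w hw
    ext i j
    by_cases hij : i = j
    · subst hij
      rw [Matrix.diagonal_apply_eq, Matrix.mul_apply]
      exact Finset.sum_congr rfl fun m _ => by
        rw [Matrix.mul_diagonal, Matrix.transpose_apply]
    · rw [Matrix.diagonal_apply_ne _ hij, Matrix.mul_apply, ← hw i j hij]
      exact Finset.sum_congr rfl fun m _ => by
        rw [Matrix.mul_diagonal, Matrix.transpose_apply]
  have key : ∀ (i m m' : Fin N), G i m ≠ 0 → G i m' ≠ 0 → m = m' := by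
    intro i m m' hm hm'
    by_contra hne
    haveI : Nontrivial (Fin N) := ⟨⟨m, m', hne⟩⟩
    have hv : ∀ k : Fin N, (fun ν : Fin K => Λ ν k) ≠ 0 := by
      intro k
      obtain ⟨k', hk'⟩ := exists_ne k
      have hli := hind k k' (Ne.symm hk')
      have := hli.ne_zero 0
      simpa using this
    obtain ⟨α, hα⟩ := exists_nonvanishing_functional (fun k ν => Λ ν k) hv
    set d : Fin N → ℝ := fun k => ∑ ν, α ν * Λ ν k with hd
    have hdne : ∀ k, d k ≠ 0 := hα
    have hcd : ∀ i' j' : Fin N, i' ≠ j' → ∑ m'', G i' m'' * d m'' * G j' m'' = 0 := by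
      intro i' j' hij
      have hexp : ∀ m'' : Fin N, G i' m'' * d m'' * G j' m''
          = ∑ ν, α ν * (G i' m'' * Λ ν m'' * G j' m'') := by
        intro m''
        rw [hd, Finset.mul_sum, Finset.sum_mul]
        exact Finset.sum_congr rfl fun ν _ => by ring
      rw [Finset.sum_congr rfl fun m'' _ => hexp m'', Finset.sum_comm]
      refine Finset.sum_eq_zero fun ν _ => ?_
      rw [← Finset.mul_sum, hc ν i' j' hij, mul_zero]
    set ed : Fin N → ℝ := fun k => ∑ m'', G k m'' * d m'' * G k m'' with hed
    set eΛ : Fin K → Fin N → ℝ := fun ν k => ∑ m'', G k m'' * Λ ν m'' * G k m'' with heΛ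
    have hE : G * diagonal d * Gᵀ = diagonal ed := hdiagGen d hcd
    have hprodne : (∏ k, ed k) ≠ 0 := by
      have hdet : (diagonal ed).det = G.det * (∏ k, d k) * G.det := by
        rw [← hE, Matrix.det_mul, Matrix.det_mul, Matrix.det_transpose, Matrix.det_diagonal]
      rw [Matrix.det_diagonal] at hdet
      rw [hdet]
      exact mul_ne_zero (mul_ne_zero hdetG
        (Finset.prod_ne_zero_iff.mpr fun k _ => hdne k)) hdetG
    have he : ∀ k, ed k ≠ 0 := fun k =>
      Finset.prod_ne_zero_iff.mp hprodne k (Finset.mem_univ k)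
    have hmain : ∀ ν : Fin K,
        diagonal (Λ ν) * Gᵀ * diagonal ed = diagonal d * Gᵀ * diagonal (eΛ ν) := by
      intro ν
      have h1 : G * diagonal (Λ ν) * Gᵀ = diagonal (eΛ ν) := hdiagGen (Λ ν) (hc ν)
      apply hG.mul_left_cancel
      calc G * (diagonal (Λ ν) * Gᵀ * diagonal ed)
          = (G * diagonal (Λ ν) * Gᵀ) * diagonal ed := by
            rw [Matrix.mul_assoc, Matrix.mul_assoc, Matrix.mul_assoc]
        _ = diagonal (eΛ ν) * diagonal ed := by rw [h1]
        _ = diagonal (fun k => eΛ ν k * ed k) := Matrix.diagonal_mul_diagonal _ _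
        _ = diagonal (fun k => ed k * eΛ ν k) := by
            rw [show (fun k => eΛ ν k * ed k) = fun k => ed k * eΛ ν k from
              funext fun k => mul_comm _ _]
        _ = diagonal ed * diagonal (eΛ ν) := (Matrix.diagonal_mul_diagonal _ _).symm
        _ = (G * diagonal d * Gᵀ) * diagonal (eΛ ν) := by rw [hE]
        _ = G * (diagonal d * Gᵀ * diagonal (eΛ ν)) := by
            rw [Matrix.mul_assoc, Matrix.mul_assoc, Matrix.mul_assoc]
    have hent : ∀ (ν : Fin K) (k : Fin N),
        Λ ν k * G i k * ed i = d k * G i k * eΛ ν i := by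
      intro ν k
      have h2 : (diagonal (Λ ν) * Gᵀ * diagonal ed) k i
          = (diagonal d * Gᵀ * diagonal (eΛ ν)) k i := by rw [hmain ν]
      rwa [Matrix.mul_diagonal, Matrix.diagonal_mul, Matrix.transpose_apply,
        Matrix.mul_diagonal, Matrix.diagonal_mul, Matrix.transpose_apply] at h2
    have h1 : ∀ ν : Fin K, Λ ν m * ed i = d m * eΛ ν i := by
      intro ν
      apply mul_left_cancel₀ hm
      linear_combination hent ν m
    have h2 : ∀ ν : Fin K, Λ ν m' * ed i = d m' * eΛ ν i := by
      intro ν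
      apply mul_left_cancel₀ hm'
      linear_combination hent ν m'
    have hprop : ∀ ν : Fin K, d m' * Λ ν m = d m * Λ ν m' := by
      intro ν
      apply mul_right_cancel₀ (he i)
      linear_combination d m' * h1 ν - d m * h2 ν
    have hli := hind m m' hne
    rw [linearIndependent_fin2] at hli
    apply hli.2 (d m / d m')
    simp only [Matrix.cons_val_one, Matrix.head_cons, Matrix.cons_val_zero]
    funext ν
    have hdm' := hdne m'
    show d m / d m' * Λ ν m' = Λ ν m
    field_simp
    linear_combination - hprop ν
  have hrow : ∀ i, ∃ m, G i m ≠ 0 := by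
    intro i
    by_contra h
    push_neg at h
    exact hdetG (Matrix.det_eq_zero_of_row_eq_zero i h)
  have hcol : ∀ m, ∃ i, G i m ≠ 0 := by
    intro m
    by_contra h
    push_neg at h
    exact hdetG (Matrix.det_eq_zero_of_column_eq_zero m h)
  choose τ hτ using hrow
  have hsurj : Function.Surjective τ := by
    intro m
    obtain ⟨i, hi⟩ := hcol m
    exact ⟨i, key i (τ i) m (hτ i) hi⟩
  have hbij : Function.Bijective τ := Finite.surjective_iff_bijective.mp hsurj
  refine ⟨Equiv.ofBijective τ hbij, fun i => G i (τ i), fun i => hτ i, ?_⟩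
  intro i j
  simp only [Equiv.ofBijective_apply]
  by_cases hij : j = τ i
  · subst hij
    rw [if_pos rfl]
  · rw [if_neg hij]
    by_contra hGij
    exact hij (key i j (τ i) hGij (hτ i))
end
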